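/- Fix x, ε ∈ (0,1). Set t₁ = xε/(1 − x(1−ε)), N₁(k) = 1 − k(1−x), N₂(k) = (1−ε)x + kεx, ψ(k) = t₁·N₁(k)³ + (1−t₁)·N₂(k)³ and Z(k) = t₁·k·(1−x)·(N₁(k)² − N₂(k)²). Then for the unique maximizer k* of Z on [0,1], one has ψ(0) − ψ(1) ≤ (27/19)·(ψ(0) − ψ(k*)). -/

import Mathlib

set_option maxHeartbeats 1000000 in
/-- Price of Anarchy at most `27/19` for quadratic prices in the step-demand
model: with `ψ(k) = t₁·N₁(k)³ + (1−t₁)·N₂(k)³` and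
`Z(k) = t₁·k·(1−x)·(N₁(k)² − N₂(k)²)`, the unique maximizer `k*` of `Z` on
`[0,1]` satisfies `ψ(0) − ψ(1) ≤ (27/19)·(ψ(0) − ψ(k*))`. -/
theorem stmt16 (x ε : ℝ) (hx : x ∈ Set.Ioo (0 : ℝ) 1) (hε : ε ∈ Set.Ioo (0 : ℝ) 1)
    (t₁ : ℝ) (ht₁ : t₁ = x * ε / (1 - x * (1 - ε)))
    (N₁ N₂ ψ Z : ℝ → ℝ)
    (hN₁ : ∀ k, N₁ k = 1 - k * (1 - x))
    (hN₂ : ∀ k, N₂ k = (1 - ε) * x + k * ε * x)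
    (hψ : ∀ k, ψ k = t₁ * (N₁ k) ^ 3 + (1 - t₁) * (N₂ k) ^ 3)
    (hZ : ∀ k, Z k = t₁ * k * (1 - x) * ((N₁ k) ^ 2 - (N₂ k) ^ 2))
    (kstar : ℝ) (hks : kstar ∈ Set.Icc (0 : ℝ) 1)
    (hmax : ∀ k ∈ Set.Icc (0 : ℝ) 1, Z k ≤ Z kstar) :
    ψ 0 - ψ 1 ≤ (27 / 19) * (ψ 0 - ψ kstar) := by
  obtain ⟨hx0, hx1⟩ := hx
  obtain ⟨he0, he1⟩ := hε
  obtain ⟨a, ha_def⟩ : ∃ a : ℝ, a = 1 - x - ε * x := ⟨_, rfl⟩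
  obtain ⟨b, hb_def⟩ : ∃ b : ℝ, b = 1 + (1 - ε) * x := ⟨_, rfl⟩
  obtain ⟨C, hC_def⟩ : ∃ C : ℝ, C = x * ε * (1 - x) := ⟨_, rfl⟩
  have hden : (0:ℝ) < 1 - x * (1 - ε) := by nlinarith
  have hden' : (1:ℝ) - x * (1 - ε) ≠ 0 := ne_of_gt hden
  have hC : 0 < C := by
    have h1x : 0 < 1 - x := by linarith
    rw [hC_def]; positivity
  have hb1 : (1:ℝ) < b := by rw [hb_def]; nlinarith
  have hb0 : (0:ℝ) < b := by linarith
  have ha1 : a < 1 := by rw [ha_def]; nlinarith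
  -- identity for ψ
  have hψid : ∀ k : ℝ, ψ 0 - ψ k
      = 3 * C * (b * k - (a + b) * k ^ 2 / 2 + a * k ^ 3 / 3) := by
    intro k
    rw [hψ, hψ, hN₁, hN₂, hN₁, hN₂, ht₁, ha_def, hb_def, hC_def]
    field_simp
    ring
  -- identity for Z
  have hZid : ∀ k : ℝ, Z k = C * (b * k - (a + b) * k ^ 2 + a * k ^ 3) := by
    intro k
    rw [hZ, hN₁, hN₂, ht₁, ha_def, hb_def, hC_def]
    field_simp
    ring
  set f : ℝ → ℝ := fun k => b * k - (a + b) * k ^ 2 + a * k ^ 3 with hf_def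
  have hfmax : ∀ k ∈ Set.Icc (0:ℝ) 1, f k ≤ f kstar := by
    intro k hk
    have h := hmax k hk
    rw [hZid, hZid] at h
    exact le_of_mul_le_mul_left h hC
  have hf13 : 0 < f (1/3 : ℝ) := by
    have hfe : f (1/3 : ℝ) = b * (1/3) - (a + b) * (1/3)^2 + a * (1/3)^3 := rfl
    rw [hfe]; nlinarith
  have h13mem : (1/3 : ℝ) ∈ Set.Icc (0:ℝ) 1 := by norm_num
  have hfk : 0 < f kstar := lt_of_lt_of_le hf13 (hfmax _ h13mem)
  have hk0 : 0 < kstar := by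
    rcases lt_or_eq_of_le hks.1 with h | h
    · exact h
    · exfalso
      have hfe : f 0 = b * 0 - (a + b) * 0^2 + a * 0^3 := rfl
      rw [← h, hfe] at hfk; nlinarith
  have hk1 : kstar < 1 := by
    rcases lt_or_eq_of_le hks.2 with h | h
    · exact h
    · exfalso
      have hfe : f 1 = b * 1 - (a + b) * 1^2 + a * 1^3 := rfl
      rw [h, hfe] at hfk; nlinarith
  have hbat : 0 < b - a * kstar := by
    have hpos : 0 < kstar * (1 - kstar) := by nlinarith
    have hfe : f kstar = kstar * (1 - kstar) * (b - a * kstar) := by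
      show b * kstar - (a + b) * kstar ^ 2 + a * kstar ^ 3
        = kstar * (1 - kstar) * (b - a * kstar)
      ring
    nlinarith [hfe]
  -- derivative of f at kstar is zero
  have hd : HasDerivAt f (b - 2 * (a + b) * kstar + 3 * a * kstar ^ 2) kstar := by
    have h1 : HasDerivAt (fun k : ℝ => k) 1 kstar := hasDerivAt_id kstar
    have h2 : HasDerivAt (fun k : ℝ => k ^ 2) (2 * kstar) kstar := by
      simpa using hasDerivAt_pow 2 kstar
    have h3 : HasDerivAt (fun k : ℝ => k ^ 3) (3 * kstar ^ 2) kstar := by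
      simpa using hasDerivAt_pow 3 kstar
    have h4 := ((h1.const_mul b).sub (h2.const_mul (a + b))).add (h3.const_mul a)
    exact h4.congr_deriv (by ring)
  have hmem : Set.Icc (0:ℝ) 1 ∈ nhds kstar := Icc_mem_nhds hk0 hk1
  have hmaxon : IsMaxOn f (Set.Icc 0 1) kstar := fun k hk => hfmax k hk
  have hloc : IsLocalMax f kstar := hmaxon.isLocalMax hmem
  have hE0 := hloc.hasDerivAt_eq_zero hd
  have hE : b * (1 - 2 * kstar) = a * kstar * (2 - 3 * kstar) := by
    linear_combination hE0
  clear_value f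
  clear hd hloc hmaxon hmem hE0 hfmax hfk hf13 h13mem hmax hZ hψ hN₁ hN₂ hZid hf_def f ht₁ hden hden'
  set t : ℝ := kstar with ht_def
  -- t < 2/3
  have ht23 : t < 2/3 := by
    by_contra hcon
    push_neg at hcon
    have h1 : 0 ≤ t * (3 * t - 2) := by nlinarith
    have h4 : a * t ^ 2 * (3 * t - 2) = b * t * (2 * t - 1) := by
      linear_combination t * hE
    have h5 : 0 < b * t := mul_pos hb0 hk0
    nlinarith [mul_nonneg (le_of_lt hbat) h1, mul_pos h5 (by linarith : (0:ℝ) < 1 - t)]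
  -- a * (1 - 2t) ≥ 0
  have h2 : 0 < t * (2 - 3 * t) := by nlinarith
  have h3 : a * (1 - 2 * t) * (t * (2 - 3 * t)) = b * (1 - 2 * t) ^ 2 := by
    linear_combination (2 * t - 1) * hE
  have hat : 0 ≤ a * (1 - 2 * t) := by
    nlinarith [h3, h2, mul_nonneg (le_of_lt hb0) (sq_nonneg (1 - 2 * t))]
  -- key inequality 19·g(1) ≤ 27·g(t)
  have hkey : 19 * (b * 1 - (a + b) * 1 ^ 2 / 2 + a * 1 ^ 3 / 3)
      ≤ 27 * (b * t - (a + b) * t ^ 2 / 2 + a * t ^ 3 / 3) := by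
    rcases eq_or_ne t (1/2 : ℝ) with hhalf | hhalf
    · have ha0 : a = 0 := by
        rw [hhalf] at hE; nlinarith [hE]
      rw [hhalf, ha0]; nlinarith
    · have hne : (1 - 2 * t) ≠ 0 := by
        intro hz; apply hhalf; linarith
      have hsq : 0 < (1 - 2 * t) ^ 2 := by positivity
      have hq : (0:ℝ) ≤ 15 * t ^ 2 - 38 * t + 19 := by
        nlinarith [sq_nonneg (t - 2/3)]
      have hp : 0 ≤ 27 * (a * (1 - 2 * t)) * (3 * t - 1) ^ 2 * (15 * t ^ 2 - 38 * t + 19) := by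
        have := mul_nonneg (mul_nonneg (by linarith : (0:ℝ) ≤ 27 * (a * (1 - 2*t)))
          (sq_nonneg (3 * t - 1))) hq
        linarith [this]
      have hid : 162 * (1 - 2 * t) ^ 2
            * (27 * (b * t - (a + b) * t ^ 2 / 2 + a * t ^ 3 / 3)
               - 19 * (b * 1 - (a + b) * 1 ^ 2 / 2 + a * 1 ^ 3 / 3))
          = 27 * (a * (1 - 2 * t)) * (3 * t - 1) ^ 2 * (15 * t ^ 2 - 38 * t + 19) := by
        linear_combination (27 * (1 - 2 * t) * (162 * t - 81 * t ^ 2 - 57)) * hE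
      have h6 : 0 ≤ 162 * (1 - 2 * t) ^ 2
            * (27 * (b * t - (a + b) * t ^ 2 / 2 + a * t ^ 3 / 3)
               - 19 * (b * 1 - (a + b) * 1 ^ 2 / 2 + a * 1 ^ 3 / 3)) := by
        rw [hid]; exact hp
      have h8 : 0 < 162 * (1 - 2 * t) ^ 2 := by positivity
      nlinarith [h6, h8]
  rw [hψid 1, hψid kstar]
  have h9 := mul_le_mul_of_nonneg_left hkey (le_of_lt hC)
  show 3 * C * (b * 1 - (a + b) * 1 ^ 2 / 2 + a * 1 ^ 3 / 3)
      ≤ 27 / 19 * (3 * C * (b * t - (a + b) * t ^ 2 / 2 + a * t ^ 3 / 3))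
  nlinarith [h9]
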